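/- arXiv:1405.2327 — 4 statements merged into one kernel-verified Lean document; each statement's English description precedes it below -/
import Mathlib

section
/- Let X be a Hausdorff locally convex topological vector space, V ⊆ X a convex set, and U ⊆ V a self segment-dense subset of V. Then for every finite subset {u₁, …, uₙ} ⊆ U, the closure of conv{u₁, …, uₙ} ∩ U equals conv{u₁, …, uₙ}. -/
open Set Filter

section Defs
variable {X : Type*} [AddCommGroup X] [Module ℝ X]

/-- `U` is self segment-dense in `V` w.r.t. the topology `τ`. -/
def SelfSegmentDense (τ : TopologicalSpace X) (U V : Set X) : Prop :=
  U ⊆ V ∧ V ⊆ @closure X τ U ∧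
    ∀ x ∈ U, ∀ y ∈ U, segment ℝ x y ⊆ @closure X τ (segment ℝ x y ∩ U)

/-- Convexity of a set-valued map `F : X ⇉ ℝ` on a (possibly non-convex) set `D`. -/
def SVConvexOn (F : X → Set ℝ) (D : Set X) : Prop :=
  ∀ (n : ℕ) (p : Fin n → X) (w : Fin n → ℝ),
    (∀ i, p i ∈ D) → (∀ i, 0 ≤ w i) → (∑ i, w i) = 1 →
    (∑ i, w i • p i) ∈ D →
    ∀ g : Fin n → ℝ, (∀ i, g i ∈ F (p i)) →
      (∑ i, w i * g i) ∈ F (∑ i, w i • p i)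

/-- Concavity of a set-valued map `F : X ⇉ ℝ` on `D`. -/
def SVConcaveOn (F : X → Set ℝ) (D : Set X) : Prop :=
  ∀ (n : ℕ) (p : Fin n → X) (w : Fin n → ℝ),
    (∀ i, p i ∈ D) → (∀ i, 0 ≤ w i) → (∑ i, w i) = 1 →
    (∑ i, w i • p i) ∈ D →
    ∀ z ∈ F (∑ i, w i • p i), ∃ g : Fin n → ℝ,
      (∀ i, g i ∈ F (p i)) ∧ z = ∑ i, w i * g i

/-- Convexity of a real function on a (possibly non-convex) set `D`. -/
def FnConvexOn (f : X → ℝ) (D : Set X) : Prop :=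
  ∀ (n : ℕ) (p : Fin n → X) (w : Fin n → ℝ),
    (∀ i, p i ∈ D) → (∀ i, 0 ≤ w i) → (∑ i, w i) = 1 →
    (∑ i, w i • p i) ∈ D →
    f (∑ i, w i • p i) ≤ ∑ i, w i * f (p i)

/-- Concavity of a real function on `D`. -/
def FnConcaveOn (f : X → ℝ) (D : Set X) : Prop :=
  ∀ (n : ℕ) (p : Fin n → X) (w : Fin n → ℝ),
    (∀ i, p i ∈ D) → (∀ i, 0 ≤ w i) → (∑ i, w i) = 1 →
    (∑ i, w i • p i) ∈ D →
    ∑ i, w i * f (p i) ≤ f (∑ i, w i • p i)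

end Defs

section TopDefs
variable {X : Type*}

/-- Lower semicontinuity of a set-valued map at every point of `S`, within `K`. -/
def SVLscOn (τ : TopologicalSpace X) (F : X → Set ℝ) (K S : Set X) : Prop :=
  ∀ x ∈ S, ∀ N : Set ℝ, IsOpen N → (F x ∩ N).Nonempty →
    ∀ᶠ y in @nhdsWithin X τ x K, (F y ∩ N).Nonempty

/-- Upper semicontinuity of a set-valued map at every point of `S`, within `K`. -/
def SVUscOn (τ : TopologicalSpace X) (F : X → Set ℝ) (K S : Set X) : Prop :=
  ∀ x ∈ S, ∀ N : Set ℝ, IsOpen N → F x ⊆ N →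
    ∀ᶠ y in @nhdsWithin X τ x K, F y ⊆ N

/-- Upper semicontinuity of a real function at every point of `S`, within `K`. -/
def USCOn (τ : TopologicalSpace X) (f : X → ℝ) (K S : Set X) : Prop :=
  ∀ x ∈ S, ∀ b : ℝ, f x < b → ∀ᶠ y in @nhdsWithin X τ x K, f y < b

/-- Lower semicontinuity of a real function at every point of `S`, within `K`. -/
def LSCOn (τ : TopologicalSpace X) (f : X → ℝ) (K S : Set X) : Prop :=
  ∀ x ∈ S, ∀ b : ℝ, b < f x → ∀ᶠ y in @nhdsWithin X τ x K, b < f y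

end TopDefs

/-- The weak topology of a topological vector space. -/
def weakTop (X : Type*) [AddCommGroup X] [Module ℝ X] [TopologicalSpace X] : TopologicalSpace X :=
  ⨅ f : X →L[ℝ] ℝ, TopologicalSpace.induced f inferInstance

/-- A normed space is reflexive if the canonical inclusion into the double dual is surjective. -/
def IsReflexiveSpace (X : Type*) [NormedAddCommGroup X] [NormedSpace ℝ X] : Prop :=
  Function.Surjective (NormedSpace.inclusionInDoubleDual ℝ X)

section AuxSSD
variable {X : Type*} [AddCommGroup X] [Module ℝ X] [TopologicalSpace X]
  [IsTopologicalAddGroup X] [ContinuousSMul ℝ X]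

lemma aux_convexHull_sub_closure (U : Set X)
    (hseg : ∀ x ∈ U, ∀ y ∈ U, segment ℝ x y ⊆ closure (segment ℝ x y ∩ U)) :
    ∀ s : Finset X, (s : Set X) ⊆ U →
      convexHull ℝ (s : Set X) ⊆ closure (convexHull ℝ (s : Set X) ∩ U) := by
  classical
  intro s
  induction s using Finset.induction with
  | empty => simp
  | @insert a s ha ih =>
    intro hs
    have haU : a ∈ U := hs (by simp)
    have hsU : (s : Set X) ⊆ U := fun x hx => hs (by simp [hx])
    have hcoe : ((insert a s : Finset X) : Set X) = insert a (s : Set X) := by simp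
    rcases s.eq_empty_or_nonempty with rfl | hne
    · intro x hx
      rw [show ((insert a ∅ : Finset X) : Set X) = {a} by simp] at hx
      rw [convexHull_singleton, mem_singleton_iff] at hx
      subst hx
      exact subset_closure ⟨by simp [convexHull_singleton], haU⟩
    · intro x hx
      rw [hcoe, convexHull_insert (Finset.coe_nonempty.mpr hne)] at hx
      rw [mem_convexJoin] at hx
      obtain ⟨a', ha', z, hz, hxseg⟩ := hx
      rw [mem_singleton_iff] at ha'
      rw [ha'] at hxseg
      clear ha'
      obtain ⟨u, v, hu, hv, huv, hx⟩ := hxseg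
      -- z ∈ closure (conv s ∩ U)
      have hzcl : z ∈ closure (convexHull ℝ (s : Set X) ∩ U) := ih hsU hz
      set C := convexHull ℝ ((insert a s : Finset X) : Set X) ∩ U with hC
      have hconv : Convex ℝ (convexHull ℝ ((insert a s : Finset X) : Set X)) :=
        convex_convexHull ℝ _
      have hf : Continuous fun w : X => u • a + v • w :=
        continuous_const.add (continuous_id.const_smul v)
      have hmaps : MapsTo (fun w : X => u • a + v • w)
          (convexHull ℝ (s : Set X) ∩ U) (closure C) := by
        intro w ⟨hwconv, hwU⟩
        have hwseg : u • a + v • w ∈ segment ℝ a w := ⟨u, v, hu, hv, huv, rfl⟩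
        have h1 : segment ℝ a w ∩ U ⊆ C := by
          intro y ⟨hy1, hy2⟩
          refine ⟨?_, hy2⟩
          have haC : a ∈ convexHull ℝ ((insert a s : Finset X) : Set X) :=
            subset_convexHull ℝ _ (by simp)
          have hwC : w ∈ convexHull ℝ ((insert a s : Finset X) : Set X) := by
            apply convexHull_mono (by rw [hcoe]; exact subset_insert _ _) hwconv
          exact hconv.segment_subset haC hwC hy1
        exact closure_mono h1 (hseg a haU w hwU hwseg)
      have := map_mem_closure hf hzcl hmaps
      rw [closure_closure] at this
      rw [← hx]
      exact this

end AuxSSD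

/-- Lemma 5.1: for a self segment-dense subset `U` of a convex set `V`,
the trace of `U` on any finitely generated convex polytope with vertices in `U` is dense there. -/
theorem closure_convexHull_inter_selfSegmentDense {X : Type*} [AddCommGroup X] [Module ℝ X]
    [TopologicalSpace X] [IsTopologicalAddGroup X] [ContinuousSMul ℝ X] [T2Space X]
    [LocallyConvexSpace ℝ X] (V U : Set X) (hV : Convex ℝ V)
    (hU : SelfSegmentDense (inferInstance : TopologicalSpace X) U V)
    (s : Finset X) (hs : (s : Set X) ⊆ U) :
    closure (convexHull ℝ (s : Set X) ∩ U) = convexHull ℝ (s : Set X) := by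
  obtain ⟨hUV, hdense, hseg⟩ := hU
  apply Set.Subset.antisymm
  · exact closure_minimal inter_subset_left (s.finite_toSet.isClosed_convexHull (𝕜 := ℝ))
  · exact aux_convexHull_sub_closure U hseg s hs
end

section
/- Let V be the closed unit ball of ℝ³ and A the interior (relative to the plane z=0) of the square with vertices (−1,0,0), (0,−1,0), (1,0,0), (0,1,0). Then U = V \ A is dense in V but is not self segment-dense in V: for u₁ = (3/5, 3/5, 0) and u₂ = (−3/5, −3/5, 0), both in U, the set [u₁,u₂] ∩ U is not dense in [u₁,u₂], and hence cl(conv{u₁,u₂} ∩ U) ≠ conv{u₁,u₂}. -/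
open Set Filter

/-- removing the open square from the unit ball of ℝ³ gives a dense but not
self segment-dense subset. -/
theorem dense_not_selfSegmentDense_example :
    ∀ u₁ u₂ : EuclideanSpace ℝ (Fin 3),
      u₁ = !₂[3/5, 3/5, 0] → u₂ = !₂[-3/5, -3/5, 0] →
      (Metric.closedBall (0 : EuclideanSpace ℝ (Fin 3)) 1 ⊆
        closure (Metric.closedBall (0 : EuclideanSpace ℝ (Fin 3)) 1 \
          {p : EuclideanSpace ℝ (Fin 3) | |p 0| + |p 1| < 1 ∧ p 2 = 0})) ∧
      u₁ ∈ Metric.closedBall (0 : EuclideanSpace ℝ (Fin 3)) 1 \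
          {p : EuclideanSpace ℝ (Fin 3) | |p 0| + |p 1| < 1 ∧ p 2 = 0} ∧
      u₂ ∈ Metric.closedBall (0 : EuclideanSpace ℝ (Fin 3)) 1 \
          {p : EuclideanSpace ℝ (Fin 3) | |p 0| + |p 1| < 1 ∧ p 2 = 0} ∧
      ¬ (segment ℝ u₁ u₂ ⊆ closure (segment ℝ u₁ u₂ ∩
          (Metric.closedBall (0 : EuclideanSpace ℝ (Fin 3)) 1 \
            {p : EuclideanSpace ℝ (Fin 3) | |p 0| + |p 1| < 1 ∧ p 2 = 0}))) ∧
      closure (convexHull ℝ {u₁, u₂} ∩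
          (Metric.closedBall (0 : EuclideanSpace ℝ (Fin 3)) 1 \
            {p : EuclideanSpace ℝ (Fin 3) | |p 0| + |p 1| < 1 ∧ p 2 = 0})) ≠
        convexHull ℝ {u₁, u₂} ∧
      ¬ SelfSegmentDense (inferInstance : TopologicalSpace (EuclideanSpace ℝ (Fin 3)))
        (Metric.closedBall (0 : EuclideanSpace ℝ (Fin 3)) 1 \
          {p : EuclideanSpace ℝ (Fin 3) | |p 0| + |p 1| < 1 ∧ p 2 = 0})
        (Metric.closedBall (0 : EuclideanSpace ℝ (Fin 3)) 1) := by
  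
  intro u₁ u₂ h₁ h₂
  -- membership of u₁ and u₂ in U
  have hu₁ : u₁ ∈ Metric.closedBall (0 : EuclideanSpace ℝ (Fin 3)) 1 \
      {p : EuclideanSpace ℝ (Fin 3) | |p 0| + |p 1| < 1 ∧ p 2 = 0} := by
    constructor
    · rw [mem_closedBall_zero_iff, h₁, EuclideanSpace.norm_eq, Fin.sum_univ_three]
      simp only [Matrix.cons_val_zero, Matrix.cons_val_one, Matrix.head_cons,
        Matrix.cons_val_two, Matrix.tail_cons]
      rw [show (1:ℝ) = Real.sqrt 1 by simp]
      apply Real.sqrt_le_sqrt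
      norm_num
    · intro hmem
      have := hmem.1
      rw [h₁] at this
      norm_num [Matrix.cons_val_zero, Matrix.cons_val_one] at this
  have hu₂ : u₂ ∈ Metric.closedBall (0 : EuclideanSpace ℝ (Fin 3)) 1 \
      {p : EuclideanSpace ℝ (Fin 3) | |p 0| + |p 1| < 1 ∧ p 2 = 0} := by
    constructor
    · rw [mem_closedBall_zero_iff, h₂, EuclideanSpace.norm_eq, Fin.sum_univ_three]
      simp only [Matrix.cons_val_zero, Matrix.cons_val_one, Matrix.head_cons,
        Matrix.cons_val_two, Matrix.tail_cons]
      rw [show (1:ℝ) = Real.sqrt 1 by simp]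
      apply Real.sqrt_le_sqrt
      norm_num
    · intro hmem
      have := hmem.1
      rw [h₂] at this
      norm_num [Matrix.cons_val_zero, Matrix.cons_val_one] at this
  -- density of U in the ball
  have hdense : Metric.closedBall (0 : EuclideanSpace ℝ (Fin 3)) 1 ⊆
      closure (Metric.closedBall (0 : EuclideanSpace ℝ (Fin 3)) 1 \
        {p : EuclideanSpace ℝ (Fin 3) | |p 0| + |p 1| < 1 ∧ p 2 = 0}) := by
    intro x hx
    rw [mem_closedBall_zero_iff] at hx
    rw [Metric.mem_closure_iff]
    intro ε hε
    set s : ℝ := if 0 ≤ x 2 then 1 else -1 with hs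
    have hs1 : |s| = 1 := by
      rw [hs]; split <;> norm_num
    set t : ℝ := min (ε/3) 1 with ht
    have ht0 : 0 < t := lt_min (by linarith) one_pos
    have ht1 : t ≤ 1 := min_le_right _ _
    have hte : t ≤ ε/3 := min_le_left _ _
    have hns : ‖EuclideanSpace.single (2 : Fin 3) s‖ = 1 := by
      rw [EuclideanSpace.norm_single]; simpa using hs1
    refine ⟨(1-t) • x + t • EuclideanSpace.single (2 : Fin 3) s, ⟨?_, ?_⟩, ?_⟩
    · rw [mem_closedBall_zero_iff]
      calc ‖(1-t) • x + t • EuclideanSpace.single (2 : Fin 3) s‖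
          ≤ ‖(1-t) • x‖ + ‖t • EuclideanSpace.single (2 : Fin 3) s‖ := norm_add_le _ _
        _ = (1-t) * ‖x‖ + t * 1 := by
            rw [norm_smul, norm_smul, hns, Real.norm_eq_abs, Real.norm_eq_abs,
              abs_of_nonneg (by linarith : (0:ℝ) ≤ 1 - t), abs_of_nonneg ht0.le]
        _ ≤ (1-t) * 1 + t * 1 := by nlinarith
        _ = 1 := by ring
    · intro hmem
      have h2 : ((1-t) • x + t • EuclideanSpace.single (2 : Fin 3) s) 2 = (1-t) * x 2 + t * s := by
        simp [EuclideanSpace.single_apply]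
      have h0 := hmem.2
      rw [h2] at h0
      rcases le_or_gt 0 (x 2) with hx2 | hx2
      · rw [hs, if_pos hx2] at h0; nlinarith
      · rw [hs, if_neg (not_le.mpr hx2)] at h0; nlinarith
    · have hxy : x - ((1-t) • x + t • EuclideanSpace.single (2 : Fin 3) s)
          = t • (x - EuclideanSpace.single (2 : Fin 3) s) := by
        module
      rw [dist_eq_norm, hxy, norm_smul, Real.norm_eq_abs, abs_of_nonneg ht0.le]
      calc t * ‖x - EuclideanSpace.single (2 : Fin 3) s‖
          ≤ t * (‖x‖ + ‖EuclideanSpace.single (2 : Fin 3) s‖) :=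
            mul_le_mul_of_nonneg_left (norm_sub_le _ _) ht0.le
        _ ≤ t * 2 := by rw [hns]; nlinarith
        _ < ε := by linarith
  -- the segment [u₁, u₂] ∩ U is not dense in the segment
  have hnotdense : ¬ (segment ℝ u₁ u₂ ⊆ closure (segment ℝ u₁ u₂ ∩
      (Metric.closedBall (0 : EuclideanSpace ℝ (Fin 3)) 1 \
        {p : EuclideanSpace ℝ (Fin 3) | |p 0| + |p 1| < 1 ∧ p 2 = 0}))) := by
    intro hsub
    have key : segment ℝ u₁ u₂ ∩
        (Metric.closedBall (0 : EuclideanSpace ℝ (Fin 3)) 1 \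
          {p : EuclideanSpace ℝ (Fin 3) | |p 0| + |p 1| < 1 ∧ p 2 = 0}) ⊆
        {p : EuclideanSpace ℝ (Fin 3) | (1:ℝ)/2 ≤ |p 0|} := by
      rintro p ⟨⟨a, b, ha, hb, hab, rfl⟩, -, hA⟩
      have h0 : (a • u₁ + b • u₂) 0 = 3/5 * (a - b) := by
        subst h₁ h₂
        show a * _ + b * _ = _
        norm_num [Matrix.cons_val_zero]; ring
      have hc1 : (a • u₁ + b • u₂) 1 = 3/5 * (a - b) := by
        subst h₁ h₂
        show a * _ + b * _ = _
        norm_num [Matrix.cons_val_one]; ring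
      have hc2 : (a • u₁ + b • u₂) 2 = 0 := by
        subst h₁ h₂
        show a * _ + b * _ = _
        norm_num [Matrix.cons_val_two, Matrix.tail_cons, Matrix.head_cons]
      rw [mem_setOf_eq, h0, hc1, hc2] at hA
      rw [mem_setOf_eq, h0]
      by_contra hlt
      push_neg at hlt
      exact hA ⟨by linarith, rfl⟩
    have hclosed : IsClosed {p : EuclideanSpace ℝ (Fin 3) | (1:ℝ)/2 ≤ |p 0|} := by
      have hcont : Continuous fun p : EuclideanSpace ℝ (Fin 3) => |p 0| :=
        ((EuclideanSpace.proj (0 : Fin 3)).continuous).abs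
      exact isClosed_le continuous_const hcont
    have hzero : (0 : EuclideanSpace ℝ (Fin 3)) ∈ segment ℝ u₁ u₂ := by
      refine ⟨1/2, 1/2, by norm_num, by norm_num, by norm_num, ?_⟩
      subst h₁ h₂
      ext i
      show (1:ℝ)/2 * _ + 1/2 * _ = _
      fin_cases i <;> norm_num
    have hmem := closure_minimal key hclosed (hsub hzero)
    rw [mem_setOf_eq] at hmem
    norm_num at hmem
  refine ⟨hdense, hu₁, hu₂, hnotdense, ?_, ?_⟩
  · intro heq
    apply hnotdense
    rw [convexHull_pair] at heq
    exact heq.symm.subset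
  · rintro ⟨-, -, h3⟩
    exact hnotdense (h3 u₁ hu₁ u₂ hu₂)
end

section
/- Let A ⊆ ℝⁿ be nonempty compact and convex and suppose sup_{z ∈ A} ⟨z,y⟩ ≥ 0 for every y ∈ ℝⁿ with nonnegative coordinates summing to 1 (equivalently for every y in the simplex Mⁿ). Then A ∩ ℝ₊ⁿ ≠ ∅, i.e., A contains a point with all coordinates nonnegative. -/
open Set Filter

/-- separation step of the Debreu–Gale–Nikaïdo theorem. -/
theorem compact_convex_inter_orthant (n : ℕ) (A : Set (EuclideanSpace ℝ (Fin n)))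
    (hne : A.Nonempty) (hcomp : IsCompact A) (hconv : Convex ℝ A)
    (h : ∀ y : EuclideanSpace ℝ (Fin n), (∀ i, 0 ≤ y i) → (∑ i, y i) = 1 →
      0 ≤ sSup ((fun z => (inner ℝ z y : ℝ)) '' A)) :
    ∃ z ∈ A, ∀ i, 0 ≤ z i := by
  by_contra hcon
  push_neg at hcon
  set C : Set (EuclideanSpace ℝ (Fin n)) := {x | ∀ i, 0 ≤ x i} with hCdef
  have hCclosed : IsClosed C := by
    have : C = ⋂ i, {x : EuclideanSpace ℝ (Fin n) | 0 ≤ x i} := by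
      ext x; simp [hCdef]
    rw [this]
    exact isClosed_iInter fun i =>
      isClosed_le continuous_const (EuclideanSpace.proj i).continuous
  have hCconv : Convex ℝ C := by
    intro x hx y hy a b ha hb hab i
    have : (a • x + b • y) i = a * x i + b * y i := rfl
    rw [this]
    have := hx i; have := hy i
    positivity
  have hdisj : Disjoint A C := by
    rw [Set.disjoint_left]
    intro z hz hzC
    obtain ⟨i, hi⟩ := hcon z hz
    exact absurd (hzC i) (not_le.mpr hi)
  obtain ⟨f, u, v, hAu, huv, hCv⟩ :=
    geometric_hahn_banach_compact_closed hconv hcomp hCconv hCclosed hdisj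
  have hv0 : v < 0 := by
    have h0 : (0 : EuclideanSpace ℝ (Fin n)) ∈ C := fun i => le_refl 0
    have := hCv 0 h0
    simpa using this
  have hu0 : u < 0 := huv.trans hv0
  set y : Fin n → ℝ := fun i => f (EuclideanSpace.single i 1) with hy
  have hsingle : ∀ (i : Fin n) (t : ℝ),
      EuclideanSpace.single i t = t • EuclideanSpace.single i (1 : ℝ) := by
    intro i t; ext j
    simp [EuclideanSpace.single_apply]
  have hynn : ∀ i, 0 ≤ y i := by
    intro i
    by_contra hyi
    push_neg at hyi
    have htpos : 0 < v / y i + 1 := by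
      have : 0 < v / y i := div_pos_of_neg_of_neg hv0 hyi
      linarith
    have hmem : EuclideanSpace.single i (v / y i + 1) ∈ C := by
      intro j
      rcases eq_or_ne j i with rfl | hne'
      · rw [EuclideanSpace.single_apply, if_pos rfl]
        exact htpos.le
      · simp [EuclideanSpace.single_apply, hne']
    have hval : f (EuclideanSpace.single i (v / y i + 1)) = (v / y i + 1) * y i := by
      rw [hsingle i, map_smul]; rfl
    have h1 := hCv _ hmem
    rw [hval] at h1
    have hh : (v / y i + 1) * y i = v + y i := by
      rw [add_mul, div_mul_cancel₀ _ hyi.ne, one_mul]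
    rw [hh] at h1
    linarith
  have hfz : ∀ z : EuclideanSpace ℝ (Fin n), f z = ∑ i, z i * y i := by
    intro z
    have hz : z = ∑ i, EuclideanSpace.single i (z i) := by
      ext j
      rw [show ((∑ i, EuclideanSpace.single i (z i)) j) = ∑ i, (EuclideanSpace.single i (z i)) j
        from by rw [WithLp.ofLp_sum]; exact Finset.sum_apply j Finset.univ _]
      simp [EuclideanSpace.single_apply]
    conv_lhs => rw [hz]
    rw [map_sum]
    congr 1; ext i
    rw [hsingle i, map_smul]; rfl
  set s : ℝ := ∑ i, y i with hs
  have hs0 : 0 < s := by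
    rcases lt_or_eq_of_le (Finset.sum_nonneg fun i _ => hynn i) with hlt | heq
    · exact hlt
    · exfalso
      have hyz : ∀ i, y i = 0 := by
        intro i
        have := (Finset.sum_eq_zero_iff_of_nonneg fun j _ => hynn j).mp heq.symm
        exact this i (Finset.mem_univ i)
      obtain ⟨a, ha⟩ := hne
      have := hAu a ha
      rw [hfz a] at this
      simp [hyz] at this
      linarith
  set Y : EuclideanSpace ℝ (Fin n) := WithLp.toLp 2 (fun i => y i / s) with hY
  have hYnn : ∀ i, 0 ≤ Y i := fun i => div_nonneg (hynn i) hs0.le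
  have hYsum : (∑ i, Y i) = 1 := by
    simp only [hY, PiLp.toLp_apply]
    rw [← Finset.sum_div]
    exact div_self hs0.ne'
  have hsup := h Y hYnn hYsum
  have hbound : sSup ((fun z => (inner ℝ z Y : ℝ)) '' A) ≤ u / s := by
    apply csSup_le (hne.image _)
    rintro b ⟨z, hz, rfl⟩
    show (inner ℝ z Y : ℝ) ≤ u / s
    have hin : (inner ℝ z Y : ℝ) = f z / s := by
      rw [hfz z, PiLp.inner_apply]
      simp only [RCLike.inner_apply, conj_trivial, hY, PiLp.toLp_apply]
      rw [Finset.sum_div]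
      exact Finset.sum_congr rfl fun i _ => by ring
    rw [hin]
    exact (div_le_div_iff_of_pos_right hs0).mpr (hAu z hz).le
  have : u / s < 0 := div_neg_of_neg_of_pos hu0 hs0
  linarith
end

section
/- Let K be the closed unit ball of the Hilbert space ℓ² and D the unit sphere, and define φ : K × K → ℝ by φ(x,y) = ⟨x,y⟩ − 1. Then: (a) for all y ∈ K, x ↦ φ(x,y) is weakly continuous on K; (b) for all x ∈ K, y ↦ φ(x,y) is affine (hence convex and concave) on K; (c) φ(x,x) = 0 for all x ∈ D; and yet the equilibrium conclusion fails: there is no x₀ ∈ K with φ(x₀,y) ≥ 0 for all y ∈ K, since φ(x, 0) = −1 for all x ∈ K. -/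
open Set Filter

/-- counterexample in ℓ² showing that the self segment-dense hypothesis
cannot be weakened to mere denseness. -/
theorem counterexample_l2 :
    (∀ y ∈ {x : lp (fun _ : ℕ => ℝ) 2 | ‖x‖ ≤ 1},
      @ContinuousOn (lp (fun _ : ℕ => ℝ) 2) ℝ (weakTop (lp (fun _ : ℕ => ℝ) 2)) _
        (fun x => (inner ℝ x y : ℝ) - 1) {x : lp (fun _ : ℕ => ℝ) 2 | ‖x‖ ≤ 1}) ∧
    (∀ x ∈ {x : lp (fun _ : ℕ => ℝ) 2 | ‖x‖ ≤ 1},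
      ∀ y₁ ∈ {x : lp (fun _ : ℕ => ℝ) 2 | ‖x‖ ≤ 1},
      ∀ y₂ ∈ {x : lp (fun _ : ℕ => ℝ) 2 | ‖x‖ ≤ 1},
      ∀ t : ℝ, 0 ≤ t → t ≤ 1 →
        ((inner ℝ x (t • y₁ + (1 - t) • y₂) : ℝ) - 1) =
          t * ((inner ℝ x y₁ : ℝ) - 1) + (1 - t) * ((inner ℝ x y₂ : ℝ) - 1)) ∧
    (∀ x ∈ {x : lp (fun _ : ℕ => ℝ) 2 | ‖x‖ = 1}, (inner ℝ x x : ℝ) - 1 = 0) ∧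
    (∀ x ∈ {x : lp (fun _ : ℕ => ℝ) 2 | ‖x‖ ≤ 1},
      (inner ℝ x (0 : lp (fun _ : ℕ => ℝ) 2) : ℝ) - 1 = -1) ∧
    ¬ ∃ x₀ ∈ {x : lp (fun _ : ℕ => ℝ) 2 | ‖x‖ ≤ 1},
        ∀ y ∈ {x : lp (fun _ : ℕ => ℝ) 2 | ‖x‖ ≤ 1}, 0 ≤ (inner ℝ x₀ y : ℝ) - 1 := by
  refine ⟨?_, ?_, ?_, ?_, ?_⟩
  · intro y _
    have hc : @Continuous _ _ (weakTop (lp (fun _ : ℕ => ℝ) 2)) _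
        (fun x : lp (fun _ : ℕ => ℝ) 2 => (inner ℝ x y : ℝ) - 1) := by
      have h1 : @Continuous _ _ (weakTop (lp (fun _ : ℕ => ℝ) 2)) _
          (innerSL ℝ y : lp (fun _ : ℕ => ℝ) 2 →L[ℝ] ℝ) := by
        rw [continuous_iff_le_induced]
        exact iInf_le _ (innerSL ℝ y)
      have h2 : (fun x : lp (fun _ : ℕ => ℝ) 2 => (inner ℝ x y : ℝ) - 1)
          = fun x => (innerSL ℝ y : lp (fun _ : ℕ => ℝ) 2 →L[ℝ] ℝ) x - 1 := by
        funext x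
        simp [real_inner_comm]
      rw [h2]
      exact @Continuous.comp (lp (fun _ : ℕ => ℝ) 2) ℝ ℝ
        (weakTop (lp (fun _ : ℕ => ℝ) 2)) _ _
        (innerSL ℝ y) (fun r : ℝ => r - 1) (continuous_sub_right (1:ℝ)) h1
    exact @Continuous.continuousOn _ _ (weakTop (lp (fun _ : ℕ => ℝ) 2)) _ _ _ hc
  · intro x _ y₁ _ y₂ _ t _ _
    rw [inner_add_right, real_inner_smul_right, real_inner_smul_right]
    ring
  · intro x hx
    rw [real_inner_self_eq_norm_sq, hx]; norm_num
  · intro x _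
    simp
  · rintro ⟨x₀, _, h⟩
    have := h 0 (by simp)
    simp at this
    linarith
end
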